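/- Let g(x) = (g₁(x), g₂(x)) with g₁(x) = E[(1/2)xᵀA_ξx] and g₂(x) = E[(1/4)(xᵀA_ξx)²] for a random symmetric matrix A_ξ. If k₁ ≥ ‖E[A_ξ]‖₂ and k₂ ≥ 3E[‖A_ξ‖₂²], then for all x, y: ‖g(x) − g(y) − ∇g(y)ᵀ(x−y)‖₂ ≤ D_h(x,y), where h(x) = (k₁/2)‖x‖₂² + (k₂/4)‖x‖₂⁴. -/

import Mathlib

open RealInnerProductSpace

private lemma pair_norm_le' (a b : ℝ) :
    ‖(EuclideanSpace.equiv (Fin 2) ℝ).symm ![a, b]‖ ≤ |a| + |b| := by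
  rw [EuclideanSpace.norm_eq]
  rw [show √(∑ i, ‖(EuclideanSpace.equiv (Fin 2) ℝ).symm ![a,b] i‖^2) = √(a^2+b^2) by
    congr 1; simp [Fin.sum_univ_two]]
  have h : a^2 + b^2 ≤ (|a| + |b|)^2 := by
    nlinarith [sq_abs a, sq_abs b, mul_nonneg (abs_nonneg a) (abs_nonneg b)]
  calc √(a^2+b^2) ≤ √((|a|+|b|)^2) := Real.sqrt_le_sqrt h
    _ = |a| + |b| := Real.sqrt_sq (by positivity)

private lemma scalar_quartic (K ny nu nm c s t a : ℝ) (hK : 0 ≤ K)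
    (hmn : nm^2 = ny^2 + c + nu^2/4)
    (hp : |s + t/2| ≤ K * nm * nu)
    (ht : |t| ≤ K * nu^2)
    (ha : |a| ≤ K * ny^2) :
    |(s + t/2)^2 + a*t/2| ≤ 3*K^2*(c^2 + c*nu^2 + nu^4/4 + ny^2*nu^2/2) := by
  have hp2 : (s + t/2)^2 ≤ K^2 * nm^2 * nu^2 := by
    nlinarith [hp, sq_abs (s + t/2), abs_nonneg (s + t/2)]
  have hat : |a*t| ≤ K^2 * ny^2 * nu^2 := by
    rw [abs_mul]
    nlinarith [mul_le_mul ha ht (abs_nonneg t) (by positivity : (0:ℝ) ≤ K * ny^2)]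
  have key : nm^2 * nu^2 + ny^2*nu^2/2 ≤ 3*(c^2 + c*nu^2 + nu^4/4 + ny^2*nu^2/2) := by
    rw [hmn]; nlinarith [sq_nonneg (c + nu^2/2), sq_nonneg c]
  have h1 := abs_le.mp hat
  rw [abs_le]
  constructor <;> nlinarith [sq_nonneg (s+t/2), sq_nonneg K,
    mul_le_mul_of_nonneg_left key (sq_nonneg K)]

section InnerLemmas
variable {E : Type*} [NormedAddCommGroup E] [InnerProductSpace ℝ E]

private lemma quad_expand (B : E →L[ℝ] E) (hs : ∀ v z : E, ⟪B v, z⟫ = ⟪v, B z⟫) (x y : E) :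
    ⟪x, B x⟫ = ⟪y, B y⟫ + 2 * ⟪B y, x - y⟫ + ⟪x - y, B (x - y)⟫ := by
  have hx : x = y + (x - y) := by abel
  calc ⟪x, B x⟫ = ⟪y + (x-y), B (y + (x-y))⟫ := by rw [← hx]
    _ = ⟪y, B y⟫ + ⟪y, B (x-y)⟫ + (⟪x-y, B y⟫ + ⟪x-y, B (x-y)⟫) := by
        rw [map_add, inner_add_left, inner_add_right, inner_add_right]
    _ = _ := by rw [← hs y (x-y), real_inner_comm (x-y) (B y)]; ring

private lemma mid_inner (B : E →L[ℝ] E) (hs : ∀ v z : E, ⟪B v, z⟫ = ⟪v, B z⟫) (y u : E) :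
    ⟪B (y + (2⁻¹:ℝ) • u), u⟫ = ⟪B y, u⟫ + ⟪u, B u⟫ / 2 := by
  rw [map_add, map_smul, inner_add_left, inner_smul_left]
  rw [hs u u]
  norm_num
  ring

private lemma quartic_bound (B : E →L[ℝ] E) (hs : ∀ v z : E, ⟪B v, z⟫ = ⟪v, B z⟫) (x y : E) :
    |⟪x, B x⟫^2/4 - ⟪y, B y⟫^2/4 - ⟪y, B y⟫ * ⟪B y, x - y⟫| ≤
      3 * ‖B‖^2 * (⟪y, x-y⟫^2 + ⟪y, x-y⟫*‖x-y‖^2 + ‖x-y‖^4/4 + ‖y‖^2*‖x-y‖^2/2) := by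
  have hqx : ⟪x, B x⟫ = ⟪y, B y⟫ + 2*⟪B y, x-y⟫ + ⟪x-y, B (x-y)⟫ := quad_expand B hs x y
  have hid : ⟪x, B x⟫^2/4 - ⟪y, B y⟫^2/4 - ⟪y, B y⟫ * ⟪B y, x-y⟫
      = (⟪B y, x-y⟫ + ⟪x-y, B (x-y)⟫/2)^2 + ⟪y, B y⟫ * ⟪x-y, B (x-y)⟫/2 := by rw [hqx]; ring
  rw [hid]
  have hpm : |⟪B y, x-y⟫ + ⟪x-y, B (x-y)⟫/2| ≤ ‖B‖ * ‖y + (2⁻¹:ℝ) • (x-y)‖ * ‖x-y‖ := by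
    rw [← mid_inner B hs y (x-y)]
    calc |⟪B (y + (2⁻¹:ℝ) • (x-y)), x-y⟫| ≤ ‖B (y + (2⁻¹:ℝ) • (x-y))‖ * ‖x-y‖ :=
          abs_real_inner_le_norm _ _
      _ ≤ ‖B‖ * ‖y + (2⁻¹:ℝ) • (x-y)‖ * ‖x-y‖ :=
          mul_le_mul_of_nonneg_right (B.le_opNorm _) (norm_nonneg _)
  have hmn : ‖y + (2⁻¹:ℝ) • (x-y)‖^2 = ‖y‖^2 + ⟪y, x-y⟫ + ‖x-y‖^2/4 := by
    rw [norm_add_sq_real, real_inner_smul_right, norm_smul]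
    norm_num; ring
  have hbt : |⟪x-y, B (x-y)⟫| ≤ ‖B‖ * ‖x-y‖^2 := by
    calc |⟪x-y, B (x-y)⟫| ≤ ‖x-y‖ * ‖B (x-y)‖ := abs_real_inner_le_norm _ _
      _ ≤ ‖B‖ * ‖x-y‖^2 := by
          nlinarith [B.le_opNorm (x-y), norm_nonneg (x-y), norm_nonneg (B (x-y))]
  have hba : |⟪y, B y⟫| ≤ ‖B‖ * ‖y‖^2 := by
    calc |⟪y, B y⟫| ≤ ‖y‖ * ‖B y‖ := abs_real_inner_le_norm _ _
      _ ≤ ‖B‖ * ‖y‖^2 := by nlinarith [B.le_opNorm y, norm_nonneg y, norm_nonneg (B y)]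
  exact scalar_quartic ‖B‖ ‖y‖ ‖x-y‖ ‖y + (2⁻¹:ℝ) • (x-y)‖ ⟪y, x-y⟫ ⟪B y, x-y⟫
    ⟪x-y, B (x-y)⟫ ⟪y, B y⟫ (norm_nonneg _) hmn hpm hbt hba
end InnerLemmas

private lemma symCLM {d : ℕ} (M : Matrix (Fin d) (Fin d) ℝ) (hM : M.IsSymm)
    (v u : EuclideanSpace ℝ (Fin d)) :
    ⟪Matrix.toEuclideanCLM (𝕜 := ℝ) M v, u⟫ = ⟪v, Matrix.toEuclideanCLM (𝕜 := ℝ) M u⟫ := by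
  have h : M.IsHermitian := by
    rwa [Matrix.IsHermitian, Matrix.conjTranspose_eq_transpose_of_trivial]
  have := (Matrix.isHermitian_iff_isSymmetric.mp h) v u
  exact this


set_option maxHeartbeats 2000000 in
/-- Relative-smoothness-type bound for the pair map `g = (g₁, g₂)`.
With `g₁(x) = E[(1/2)xᵀA_ξx]`, `g₂(x) = E[(1/4)(xᵀA_ξx)²]` for a random symmetric matrix
`A_ξ` (finitely many outcomes with probabilities `w i`), `k₁ ≥ ‖E[A_ξ]‖₂`,
`k₂ ≥ 3E[‖A_ξ‖₂²]`, the error of linearization of `g` is bounded by the Bregman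
divergence of `h(x) = (k₁/2)‖x‖₂² + (k₂/4)‖x‖₂⁴` (whose gradient is
`∇h(y) = (k₁ + k₂‖y‖²)y`). -/
theorem pair_map_relative_bound {d : ℕ} {ι : Type*} [Fintype ι]
    (w : ι → ℝ) (hw : ∀ i, 0 ≤ w i) (hw1 : ∑ i, w i = 1)
    (A : ι → Matrix (Fin d) (Fin d) ℝ) (hA : ∀ i, (A i).IsSymm) (k₁ k₂ : ℝ)
    (hk₁ : ‖Matrix.toEuclideanCLM (𝕜 := ℝ) (∑ i, w i • A i)‖ ≤ k₁)
    (hk₂ : 3 * ∑ i, w i * ‖Matrix.toEuclideanCLM (𝕜 := ℝ) (A i)‖ ^ 2 ≤ k₂) :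
    ∀ x y : EuclideanSpace ℝ (Fin d),
      ‖(EuclideanSpace.equiv (Fin 2) ℝ).symm
          ![(∑ i, w i * (1 / 2 * ⟪x, Matrix.toEuclideanCLM (𝕜 := ℝ) (A i) x⟫))
              - (∑ i, w i * (1 / 2 * ⟪y, Matrix.toEuclideanCLM (𝕜 := ℝ) (A i) y⟫))
              - ⟪Matrix.toEuclideanCLM (𝕜 := ℝ) (∑ i, w i • A i) y, x - y⟫,
            (∑ i, w i * (1 / 4 * ⟪x, Matrix.toEuclideanCLM (𝕜 := ℝ) (A i) x⟫ ^ 2))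
              - (∑ i, w i * (1 / 4 * ⟪y, Matrix.toEuclideanCLM (𝕜 := ℝ) (A i) y⟫ ^ 2))
              - ⟪∑ i, (w i * ⟪y, Matrix.toEuclideanCLM (𝕜 := ℝ) (A i) y⟫) •
                  Matrix.toEuclideanCLM (𝕜 := ℝ) (A i) y, x - y⟫]‖ ≤
        (k₁ / 2 * ‖x‖ ^ 2 + k₂ / 4 * ‖x‖ ^ 4)
          - (k₁ / 2 * ‖y‖ ^ 2 + k₂ / 4 * ‖y‖ ^ 4)
          - ⟪(k₁ + k₂ * ‖y‖ ^ 2) • y, x - y⟫ := by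
  intro x y
  have hsym : ∀ i, ∀ v u : EuclideanSpace ℝ (Fin d),
      ⟪Matrix.toEuclideanCLM (𝕜 := ℝ) (A i) v, u⟫
        = ⟪v, Matrix.toEuclideanCLM (𝕜 := ℝ) (A i) u⟫ := fun i => symCLM (A i) (hA i)
  have hsumsym : (∑ i, w i • A i).IsSymm := by
    unfold Matrix.IsSymm
    rw [Matrix.transpose_sum]
    exact Finset.sum_congr rfl fun i _ => (hA i).smul (w i)
  have hBbar : Matrix.toEuclideanCLM (𝕜 := ℝ) (∑ i, w i • A i)
      = ∑ i, w i • Matrix.toEuclideanCLM (𝕜 := ℝ) (A i) := by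
    rw [map_sum]
    exact Finset.sum_congr rfl fun i _ => by rw [map_smul]
  -- first component equals (1/2)⟪u, Bbar u⟫ written as a sum
  have hBy : ⟪Matrix.toEuclideanCLM (𝕜 := ℝ) (∑ i, w i • A i) y, x - y⟫
      = ∑ i, w i * ⟪Matrix.toEuclideanCLM (𝕜 := ℝ) (A i) y, x - y⟫ := by
    rw [hBbar]
    simp [ContinuousLinearMap.sum_apply, sum_inner, real_inner_smul_left, Finset.mul_sum,
      mul_assoc]
  have hBu : ⟪x - y, Matrix.toEuclideanCLM (𝕜 := ℝ) (∑ i, w i • A i) (x - y)⟫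
      = ∑ i, w i * ⟪x - y, Matrix.toEuclideanCLM (𝕜 := ℝ) (A i) (x - y)⟫ := by
    rw [hBbar]
    simp [ContinuousLinearMap.sum_apply, inner_sum, real_inner_smul_right, Finset.mul_sum,
      mul_left_comm]
  have e1eq : (∑ i, w i * (1 / 2 * ⟪x, Matrix.toEuclideanCLM (𝕜 := ℝ) (A i) x⟫))
      - (∑ i, w i * (1 / 2 * ⟪y, Matrix.toEuclideanCLM (𝕜 := ℝ) (A i) y⟫))
      - ⟪Matrix.toEuclideanCLM (𝕜 := ℝ) (∑ i, w i • A i) y, x - y⟫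
      = ⟪x - y, Matrix.toEuclideanCLM (𝕜 := ℝ) (∑ i, w i • A i) (x - y)⟫ / 2 := by
    rw [hBy, hBu, ← Finset.sum_sub_distrib, ← Finset.sum_sub_distrib, Finset.sum_div]
    refine Finset.sum_congr rfl fun i _ => ?_
    rw [quad_expand _ (hsym i) x y]
    ring
  have e2eq : (∑ i, w i * (1 / 4 * ⟪x, Matrix.toEuclideanCLM (𝕜 := ℝ) (A i) x⟫ ^ 2))
      - (∑ i, w i * (1 / 4 * ⟪y, Matrix.toEuclideanCLM (𝕜 := ℝ) (A i) y⟫ ^ 2))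
      - ⟪∑ i, (w i * ⟪y, Matrix.toEuclideanCLM (𝕜 := ℝ) (A i) y⟫) •
          Matrix.toEuclideanCLM (𝕜 := ℝ) (A i) y, x - y⟫
      = ∑ i, w i * (⟪x, Matrix.toEuclideanCLM (𝕜 := ℝ) (A i) x⟫^2/4
          - ⟪y, Matrix.toEuclideanCLM (𝕜 := ℝ) (A i) y⟫^2/4
          - ⟪y, Matrix.toEuclideanCLM (𝕜 := ℝ) (A i) y⟫
              * ⟪Matrix.toEuclideanCLM (𝕜 := ℝ) (A i) y, x - y⟫) := by
    rw [sum_inner, ← Finset.sum_sub_distrib, ← Finset.sum_sub_distrib]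
    refine Finset.sum_congr rfl fun i _ => ?_
    rw [real_inner_smul_left]
    ring
  refine (pair_norm_le' _ _).trans ?_
  rw [e1eq, e2eq]
  -- bound the first component
  have h1 : |⟪x - y, Matrix.toEuclideanCLM (𝕜 := ℝ) (∑ i, w i • A i) (x - y)⟫ / 2|
      ≤ k₁ / 2 * ‖x - y‖^2 := by
    rw [abs_div]
    have hb : |⟪x - y, Matrix.toEuclideanCLM (𝕜 := ℝ) (∑ i, w i • A i) (x - y)⟫|
        ≤ k₁ * ‖x - y‖^2 := by
      calc |⟪x - y, Matrix.toEuclideanCLM (𝕜 := ℝ) (∑ i, w i • A i) (x - y)⟫|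
          ≤ ‖x - y‖ * ‖Matrix.toEuclideanCLM (𝕜 := ℝ) (∑ i, w i • A i) (x - y)‖ :=
            abs_real_inner_le_norm _ _
        _ ≤ k₁ * ‖x - y‖^2 := by
            have h2 := (Matrix.toEuclideanCLM (𝕜 := ℝ) (∑ i, w i • A i)).le_opNorm (x - y)
            have h3 : ‖Matrix.toEuclideanCLM (𝕜 := ℝ) (∑ i, w i • A i) (x - y)‖
                ≤ k₁ * ‖x - y‖ :=
              h2.trans (mul_le_mul_of_nonneg_right hk₁ (norm_nonneg _))
            nlinarith [norm_nonneg (x - y),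
              norm_nonneg (Matrix.toEuclideanCLM (𝕜 := ℝ) (∑ i, w i • A i) (x - y))]
    rw [abs_of_nonneg (by norm_num : (0:ℝ) ≤ (2:ℝ))]
    linarith
  -- bound the second component
  set Dh : ℝ := ⟪y, x-y⟫^2 + ⟪y, x-y⟫*‖x-y‖^2 + ‖x-y‖^4/4 + ‖y‖^2*‖x-y‖^2/2 with hDh
  have hDhnn : 0 ≤ Dh := by
    rw [hDh]
    nlinarith [sq_nonneg (⟪y, x-y⟫ + ‖x-y‖^2/2), sq_nonneg ⟪y, x-y⟫,
      mul_nonneg (sq_nonneg ‖y‖) (sq_nonneg ‖x-y‖)]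
  have h2 : |∑ i, w i * (⟪x, Matrix.toEuclideanCLM (𝕜 := ℝ) (A i) x⟫^2/4
      - ⟪y, Matrix.toEuclideanCLM (𝕜 := ℝ) (A i) y⟫^2/4
      - ⟪y, Matrix.toEuclideanCLM (𝕜 := ℝ) (A i) y⟫
          * ⟪Matrix.toEuclideanCLM (𝕜 := ℝ) (A i) y, x - y⟫)| ≤ k₂ * Dh := by
    refine (Finset.abs_sum_le_sum_abs _ _).trans ?_
    have step : ∀ i ∈ Finset.univ (α := ι),
        |w i * (⟪x, Matrix.toEuclideanCLM (𝕜 := ℝ) (A i) x⟫^2/4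
          - ⟪y, Matrix.toEuclideanCLM (𝕜 := ℝ) (A i) y⟫^2/4
          - ⟪y, Matrix.toEuclideanCLM (𝕜 := ℝ) (A i) y⟫
              * ⟪Matrix.toEuclideanCLM (𝕜 := ℝ) (A i) y, x - y⟫)|
          ≤ w i * (3 * ‖Matrix.toEuclideanCLM (𝕜 := ℝ) (A i)‖^2 * Dh) := by
      intro i _
      rw [abs_mul, abs_of_nonneg (hw i)]
      exact mul_le_mul_of_nonneg_left (quartic_bound _ (hsym i) x y) (hw i)
    refine (Finset.sum_le_sum step).trans ?_
    have hsum : ∑ i, w i * (3 * ‖Matrix.toEuclideanCLM (𝕜 := ℝ) (A i)‖^2 * Dh)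
        = (3 * ∑ i, w i * ‖Matrix.toEuclideanCLM (𝕜 := ℝ) (A i)‖^2) * Dh := by
      rw [Finset.mul_sum, Finset.sum_mul]
      exact Finset.sum_congr rfl fun i _ => by ring
    rw [hsum]
    exact mul_le_mul_of_nonneg_right hk₂ hDhnn
  -- assemble
  have hX : ‖x‖^2 = ‖y‖^2 + 2*⟪y, x-y⟫ + ‖x-y‖^2 := by
    have hx : x = y + (x - y) := by abel
    calc ‖x‖^2 = ‖y + (x-y)‖^2 := by rw [← hx]
      _ = _ := by rw [norm_add_sq_real]
  have hRHS : (k₁ / 2 * ‖x‖ ^ 2 + k₂ / 4 * ‖x‖ ^ 4)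
      - (k₁ / 2 * ‖y‖ ^ 2 + k₂ / 4 * ‖y‖ ^ 4)
      - ⟪(k₁ + k₂ * ‖y‖ ^ 2) • y, x - y⟫ = k₁/2 * ‖x-y‖^2 + k₂ * Dh := by
    rw [real_inner_smul_left, hDh,
      show ‖x‖^4 = (‖x‖^2)^2 by ring, hX]
    ring
  rw [hRHS]
  linarith
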